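/- Let Σ' ⊆ Σ be a subset with Σ' = −Σ'. Let (ω_C) be a family of functions ω_C : V → [0,1], indexed by the chambers of the arrangement defined by Σ, satisfying: (1) for every chamber C and every X₀ ∈ V there exists c ∈ ℝ such that for all X ∈ V and all α ∈ Σ_C, if α(X − X₀) < c then ω_C(X) = 0; and (2) Σ_C ω_C(X) = 1 for every X ∈ V, the sum running over all chambers C. For each chamber C' of the arrangement defined by Σ', define ω_{C'} = Σ_C ω_C, the sum running over the chambers C of the arrangement defined by Σ with C ⊆ C'. Then the family (ω_{C'}), indexed by the chambers of the arrangement defined by Σ', satisfies the analogues of conditions (1) and (2) with Σ replaced by Σ'. -/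
import Mathlib


open Set

/-- The set of regular points of the arrangement defined by the finite set `S`
of linear forms: the complement of the union of the kernels. -/
def regularSet {V : Type*} [NormedAddCommGroup V] [NormedSpace ℝ V]
    (S : Finset (V →ₗ[ℝ] ℝ)) : Set V :=
  {v | ∀ α ∈ S, α v ≠ 0}

/-- A chamber of the arrangement defined by `S` is a connected component of the
set of regular points. -/
def IsChamber {V : Type*} [NormedAddCommGroup V] [NormedSpace ℝ V]
    (S : Finset (V →ₗ[ℝ] ℝ)) (C : Set V) : Prop :=
  ∃ x ∈ regularSet S, C = connectedComponentIn (regularSet S) x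

/-- `posForms S C` is the set `Σ_C` of elements of `S` that are positive on `C`. -/
def posForms {V : Type*} [NormedAddCommGroup V] [NormedSpace ℝ V]
    (S : Finset (V →ₗ[ℝ] ℝ)) (C : Set V) : Set (V →ₗ[ℝ] ℝ) :=
  {α | α ∈ S ∧ ∀ x ∈ C, 0 < α x}

section Aux
variable {V : Type*} [NormedAddCommGroup V] [NormedSpace ℝ V]

/-- The sign cell of a point: all points on which every form of `S` has the same
sign as at `x`. -/
def signCell (S : Finset (V →ₗ[ℝ] ℝ)) (x : V) : Set V :=
  {v | ∀ α ∈ S, (0 < α v ↔ 0 < α x)}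

lemma mem_signCell_self (S : Finset (V →ₗ[ℝ] ℝ)) (x : V) : x ∈ signCell S x :=
  fun _ _ => Iff.rfl

lemma signCell_eq_of_mem {S : Finset (V →ₗ[ℝ] ℝ)} {x y : V} (h : x ∈ signCell S y) :
    signCell S x = signCell S y := by
  ext v
  constructor <;> intro hv α hα
  · exact (hv α hα).trans (h α hα)
  · exact (hv α hα).trans (h α hα).symm

lemma signCell_subset_regular {S : Finset (V →ₗ[ℝ] ℝ)} (hsymm : ∀ α ∈ S, -α ∈ S)
    {x : V} (hx : x ∈ regularSet S) : signCell S x ⊆ regularSet S := by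
  intro v hv α hα
  rcases lt_trichotomy (α x) 0 with h | h | h
  · have h2 : 0 < (-α) x := by simp [h]
    have h3 := (hv (-α) (hsymm α hα)).mpr h2
    simp only [LinearMap.neg_apply, neg_pos] at h3
    exact ne_of_lt h3
  · exact absurd h (hx α hα)
  · exact ne_of_gt ((hv α hα).mpr h)

lemma convex_signCell (S : Finset (V →ₗ[ℝ] ℝ)) (x : V) : Convex ℝ (signCell S x) := by
  have h : signCell S x = ⋂ α ∈ S, {v : V | 0 < α v ↔ 0 < α x} := by
    ext v; simp [signCell]
  rw [h]
  refine convex_iInter fun α => convex_iInter fun hα => ?_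
  by_cases hpos : 0 < α x
  · have : {v : V | 0 < α v ↔ 0 < α x} = {v : V | 0 < α v} := by ext v; simp [hpos]
    rw [this]; exact convex_halfSpace_gt α.isLinear 0
  · have : {v : V | 0 < α v ↔ 0 < α x} = {v : V | α v ≤ 0} := by
      ext v; simp [hpos, not_lt]
    rw [this]; exact convex_halfSpace_le α.isLinear 0

/-- For a symmetric arrangement, the chamber of a regular point is exactly its
sign cell. -/
lemma chamber_eq_signCell [FiniteDimensional ℝ V] {S : Finset (V →ₗ[ℝ] ℝ)}
    (hsymm : ∀ α ∈ S, -α ∈ S) {x : V} (hx : x ∈ regularSet S) :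
    connectedComponentIn (regularSet S) x = signCell S x := by
  set K := connectedComponentIn (regularSet S) x with hK
  have hKpre : IsPreconnected K := isPreconnected_connectedComponentIn
  have hKsub : K ⊆ regularSet S := connectedComponentIn_subset _ _
  have hxK : x ∈ K := mem_connectedComponentIn hx
  apply Subset.antisymm
  · intro v hv α hα
    have hc : ContinuousOn α K := α.continuous_of_finiteDimensional.continuousOn
    have key : ∀ a b, a ∈ K → b ∈ K → 0 < α a → 0 < α b := by
      intro a b ha hb hpa
      by_contra h'
      push_neg at h'
      obtain ⟨w, hw, hw0⟩ := hKpre.intermediate_value hb ha hc ⟨h', le_of_lt hpa⟩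
      exact hKsub hw α hα hw0
    exact ⟨key v x hv hxK, key x v hxK hv⟩
  · exact (convex_signCell S x).isPreconnected.subset_connectedComponentIn
      (mem_signCell_self S x) (signCell_subset_regular hsymm hx)

lemma isChamber_iff_signCell [FiniteDimensional ℝ V] {S : Finset (V →ₗ[ℝ] ℝ)}
    (hsymm : ∀ α ∈ S, -α ∈ S) {C : Set V} :
    IsChamber S C ↔ ∃ x ∈ regularSet S, C = signCell S x := by
  constructor
  · rintro ⟨x, hx, rfl⟩
    exact ⟨x, hx, chamber_eq_signCell hsymm hx⟩
  · rintro ⟨x, hx, rfl⟩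
    exact ⟨x, hx, (chamber_eq_signCell hsymm hx).symm⟩

lemma chambers_finite [FiniteDimensional ℝ V] (S : Finset (V →ₗ[ℝ] ℝ))
    (hsymm : ∀ α ∈ S, -α ∈ S) : {C : Set V | IsChamber S C}.Finite := by
  have hmem : ∀ (z : V), ∀ α ∈ S,
      (0 < α z ↔ α ∈ {β : V →ₗ[ℝ] ℝ | β ∈ S ∧ ∀ v ∈ signCell S z, 0 < β v}) := by
    intro z α hα
    constructor
    · intro h; exact ⟨hα, fun v hv => (hv α hα).mpr h⟩
    · intro h; exact h.2 z (mem_signCell_self S z)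
  apply Set.Finite.of_finite_image
    (f := fun C => {β : V →ₗ[ℝ] ℝ | β ∈ S ∧ ∀ v ∈ C, 0 < β v})
  · apply Set.Finite.subset (Set.Finite.finite_subsets S.finite_toSet)
    rintro t ⟨C, _, rfl⟩ α hα
    exact hα.1
  · rintro C hC D hD hgCD
    obtain ⟨x, hx, rfl⟩ := (isChamber_iff_signCell hsymm).mp hC
    obtain ⟨y, hy, rfl⟩ := (isChamber_iff_signCell hsymm).mp hD
    refine signCell_eq_of_mem (fun α hα => ?_)
    refine (hmem x α hα).trans ?_
    rw [show {β : V →ₗ[ℝ] ℝ | β ∈ S ∧ ∀ v ∈ signCell S x, 0 < β v}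
        = {β : V →ₗ[ℝ] ℝ | β ∈ S ∧ ∀ v ∈ signCell S y, 0 < β v} from hgCD]
    exact (hmem y α hα).symm

end Aux

/-- For a symmetric subset `Σ' ⊆ Σ`, if `(ω_C)` is a family indexed by the chambers of
`Σ` satisfying conditions (1) and (2), then the family `(ω_{C'})` defined on the chambers
of `Σ'` by `ω_{C'} = ∑_{C ⊆ C'} ω_C` again satisfies the analogues of (1) and (2). -/
theorem omega_family_subarrangement {V : Type*}
    [NormedAddCommGroup V] [NormedSpace ℝ V] [FiniteDimensional ℝ V]
    (S S' : Finset (V →ₗ[ℝ] ℝ)) (hsub : S' ⊆ S)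
    (hne : ∀ α ∈ S, α ≠ 0) (hsymm : ∀ α ∈ S, -α ∈ S)
    (hsymm' : ∀ α ∈ S', -α ∈ S')
    (ω : Set V → V → ℝ)
    (hrange : ∀ C : Set V, IsChamber S C → ∀ X : V, ω C X ∈ Set.Icc (0 : ℝ) 1)
    (h1 : ∀ C : Set V, IsChamber S C → ∀ X₀ : V, ∃ c : ℝ, ∀ X : V,
      ∀ α ∈ posForms S C, α (X - X₀) < c → ω C X = 0)
    (h2 : ∀ X : V, ∑ᶠ C ∈ {C : Set V | IsChamber S C}, ω C X = 1)
    (ω' : Set V → V → ℝ)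
    (hω' : ∀ (C' : Set V) (X : V),
      ω' C' X = ∑ᶠ C ∈ {C : Set V | IsChamber S C ∧ C ⊆ C'}, ω C X) :
    (∀ C' : Set V, IsChamber S' C' → ∀ X₀ : V, ∃ c : ℝ, ∀ X : V,
      ∀ α ∈ posForms S' C', α (X - X₀) < c → ω' C' X = 0) ∧
    (∀ X : V, ∑ᶠ C' ∈ {C' : Set V | IsChamber S' C'}, ω' C' X = 1) := by
  classical
  have hregsub : regularSet S ⊆ regularSet S' := fun v hv α hα => hv α (hsub hα)
  have finS : {C : Set V | IsChamber S C}.Finite := chambers_finite S hsymm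
  have finS' : {C' : Set V | IsChamber S' C'}.Finite := chambers_finite S' hsymm'
  constructor
  · -- condition (1)
    intro C' hC' X₀
    set P : Set (Set V) := {C : Set V | IsChamber S C ∧ C ⊆ C'} with hPdef
    have hPfin : P.Finite := finS.subset (fun C hC => hC.1)
    set f : Set V → ℝ :=
      fun C => if h : IsChamber S C then Classical.choose (h1 C h X₀) else 0 with hfdef
    obtain ⟨c, hc⟩ : ∃ c : ℝ, ∀ C ∈ P, c ≤ f C := by
      obtain ⟨c, hc⟩ := (hPfin.image f).bddBelow
      exact ⟨c, fun C hC => hc (mem_image_of_mem f hC)⟩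
    refine ⟨c, fun X α hα hlt => ?_⟩
    rw [hω' C' X]
    refine finsum_mem_of_eqOn_zero (fun C hC => ?_)
    have hαC : α ∈ posForms S C := ⟨hsub hα.1, fun v hv => hα.2 v (hC.2 hv)⟩
    have hfC : f C = Classical.choose (h1 C hC.1 X₀) := dif_pos hC.1
    exact Classical.choose_spec (h1 C hC.1 X₀) X α hαC
      (lt_of_lt_of_le hlt (hfC ▸ hc C hC))
  · -- condition (2)
    intro X
    have hUnion : {C : Set V | IsChamber S C} =
        ⋃ C' ∈ {C' : Set V | IsChamber S' C'}, {C : Set V | IsChamber S C ∧ C ⊆ C'} := by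
      ext C
      simp only [mem_setOf_eq, mem_iUnion, exists_prop]
      constructor
      · intro hC
        obtain ⟨x, hx, rfl⟩ := (isChamber_iff_signCell hsymm).mp hC
        refine ⟨signCell S' x, ?_, hC, ?_⟩
        · exact (isChamber_iff_signCell hsymm').mpr ⟨x, hregsub hx, rfl⟩
        · exact fun v hv α hα => hv α (hsub hα)
      · rintro ⟨C', _, hC, _⟩
        exact hC
    have hdisj : ({C' : Set V | IsChamber S' C'}).PairwiseDisjoint
        (fun C' => {C : Set V | IsChamber S C ∧ C ⊆ C'}) := by
      intro C₁ h₁ C₂ h₂ hne12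
      rw [Function.onFun, Set.disjoint_left]
      rintro C ⟨hC, hC1⟩ ⟨-, hC2⟩
      obtain ⟨x, hx, rfl⟩ := (isChamber_iff_signCell hsymm).mp hC
      have hxC : x ∈ signCell S x := mem_signCell_self S x
      obtain ⟨y₁, hy₁, rfl⟩ := (isChamber_iff_signCell hsymm').mp h₁
      obtain ⟨y₂, hy₂, rfl⟩ := (isChamber_iff_signCell hsymm').mp h₂
      exact hne12 ((signCell_eq_of_mem (hC1 hxC)).symm.trans
        (signCell_eq_of_mem (hC2 hxC)))
    calc ∑ᶠ C' ∈ {C' : Set V | IsChamber S' C'}, ω' C' X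
        = ∑ᶠ C' ∈ {C' : Set V | IsChamber S' C'},
            ∑ᶠ C ∈ {C : Set V | IsChamber S C ∧ C ⊆ C'}, ω C X :=
          finsum_mem_congr rfl (fun C' _ => hω' C' X)
      _ = ∑ᶠ C ∈ ⋃ C' ∈ {C' : Set V | IsChamber S' C'},
            {C : Set V | IsChamber S C ∧ C ⊆ C'}, ω C X :=
          (finsum_mem_biUnion hdisj finS'
            (fun C' _ => finS.subset (fun C hC => hC.1))).symm
      _ = 1 := by rw [← hUnion]; exact h2 X
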